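/- Over R = Z/4, any R-linear endomorphism f : R^n → R^n can be written, up to pre- and post-composition with isomorphisms, as a block diagonal matrix diag(I, 2I', 0), where I and I' are identity matrices of appropriate sizes. -/

import Mathlib

open Matrix

namespace Stmt3

abbrev R4 := ZMod 4

/-- Target diagonal pattern. -/
def D (n p q : ℕ) : Matrix (Fin n) (Fin n) R4 :=
  Matrix.of (fun i j : Fin n =>
    if i = j then (if (i : ℕ) < p then 1 else if (i : ℕ) < p + q then 2 else 0) else 0)

/-- Equivalence of matrices up to invertible row/column transformations. -/
def Rel {n : ℕ} (f g : Matrix (Fin n) (Fin n) R4) : Prop :=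
  ∃ u v : Matrix (Fin n) (Fin n) R4, IsUnit u ∧ IsUnit v ∧ u * f * v = g

lemma Rel.rfl {n} (f : Matrix (Fin n) (Fin n) R4) : Rel f f :=
  ⟨1, 1, isUnit_one, isUnit_one, by simp⟩

lemma Rel.trans {n} {f g h : Matrix (Fin n) (Fin n) R4} (h1 : Rel f g) (h2 : Rel g h) :
    Rel f h := by
  obtain ⟨u, v, hu, hv, rfl⟩ := h1
  obtain ⟨u', v', hu', hv', rfl⟩ := h2
  exact ⟨u' * u, v * v', hu'.mul hu, hv.mul hv', by simp only [Matrix.mul_assoc]⟩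

lemma Rel.dvd {n} {f g : Matrix (Fin n) (Fin n) R4} (h : Rel f g)
    (hf : ∀ i j, (2 : R4) ∣ f i j) : ∀ i j, (2 : R4) ∣ g i j := by
  obtain ⟨u, v, _, _, rfl⟩ := h
  intro i j
  rw [Matrix.mul_apply]
  refine Finset.dvd_sum fun k _ => ?_
  rw [Matrix.mul_apply]
  exact Dvd.dvd.mul_right (Finset.dvd_sum fun l _ => Dvd.dvd.mul_left (hf l k) _) _

lemma isUnit_permMatrix {n : ℕ} (σ : Equiv.Perm (Fin n)) :
    IsUnit (σ.toPEquiv.toMatrix : Matrix (Fin n) (Fin n) R4) := by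
  refine isUnit_iff_exists.2 ⟨σ.symm.toPEquiv.toMatrix, ?_, ?_⟩ <;>
    rw [← PEquiv.toMatrix_trans, ← Equiv.toPEquiv_trans] <;> simp

lemma rel_submatrix {n : ℕ} (f : Matrix (Fin n) (Fin n) R4) (σ τ : Equiv.Perm (Fin n)) :
    Rel f (f.submatrix σ τ) := by
  refine ⟨σ.toPEquiv.toMatrix, τ.symm.toPEquiv.toMatrix, isUnit_permMatrix σ,
    isUnit_permMatrix τ.symm, ?_⟩
  rw [PEquiv.toMatrix_toPEquiv_mul, PEquiv.mul_toMatrix_toPEquiv]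
  ext i j
  simp

/-- `(m+1)×(m+1)` matrix with corner `a`, zero borders, and `w` in the lower block. -/
def blk {m : ℕ} (a : R4) (w : Matrix (Fin m) (Fin m) R4) :
    Matrix (Fin (m + 1)) (Fin (m + 1)) R4 :=
  Matrix.of fun i j => if hi : i = 0 then (if j = 0 then a else 0)
    else if hj : j = 0 then 0 else w (i.pred hi) (j.pred hj)

@[simp] lemma blk_zero_zero {m} (a) (w : Matrix (Fin m) (Fin m) R4) : blk a w 0 0 = a := rfl

@[simp] lemma blk_zero_succ {m} (a) (w : Matrix (Fin m) (Fin m) R4) (j : Fin m) :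
    blk a w 0 j.succ = 0 := by simp [blk, Fin.succ_ne_zero]

@[simp] lemma blk_succ_zero {m} (a) (w : Matrix (Fin m) (Fin m) R4) (i : Fin m) :
    blk a w i.succ 0 = 0 := by simp [blk, Fin.succ_ne_zero]

@[simp] lemma blk_succ_succ {m} (a) (w : Matrix (Fin m) (Fin m) R4) (i j : Fin m) :
    blk a w i.succ j.succ = w i j := by simp [blk, Fin.succ_ne_zero]

lemma blk_mul {m} (a b : R4) (w w' : Matrix (Fin m) (Fin m) R4) :
    blk a w * blk b w' = blk (a * b) (w * w') := by
  ext i j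
  rw [Matrix.mul_apply]
  rcases Fin.eq_zero_or_eq_succ i with rfl | ⟨i', rfl⟩ <;>
    rcases Fin.eq_zero_or_eq_succ j with rfl | ⟨j', rfl⟩ <;>
    rw [Fin.sum_univ_succ] <;> simp [Matrix.mul_apply]

@[simp] lemma blk_one {m} : blk 1 (1 : Matrix (Fin m) (Fin m) R4) = 1 := by
  ext i j
  rcases Fin.eq_zero_or_eq_succ i with rfl | ⟨i', rfl⟩ <;>
    rcases Fin.eq_zero_or_eq_succ j with rfl | ⟨j', rfl⟩ <;>
    simp [Matrix.one_apply, Fin.succ_ne_zero, (Fin.succ_ne_zero _).symm, Fin.succ_inj]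

lemma blk_isUnit {m} {a : R4} {w : Matrix (Fin m) (Fin m) R4} (ha : IsUnit a) (hw : IsUnit w) :
    IsUnit (blk a w) := by
  obtain ⟨b, hb⟩ := isUnit_iff_exists.1 ha
  obtain ⟨w', hw'⟩ := isUnit_iff_exists.1 hw
  exact isUnit_iff_exists.2 ⟨blk b w', by rw [blk_mul, hb.1, hw'.1, blk_one],
    by rw [blk_mul, hb.2, hw'.2, blk_one]⟩

lemma Rel.blk_congr {m} {B C : Matrix (Fin m) (Fin m) R4} (h : Rel B C) (a : R4) :
    Rel (blk a B) (blk a C) := by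
  obtain ⟨u, v, hu, hv, rfl⟩ := h
  exact ⟨blk 1 u, blk 1 v, blk_isUnit isUnit_one hu, blk_isUnit isUnit_one hv,
    by rw [blk_mul, blk_mul, one_mul, mul_one]⟩

lemma isUnit_one_sub {n : ℕ} {E : Matrix (Fin n) (Fin n) R4} (hE : E * E = 0) :
    IsUnit (1 - E) := by
  have h1 : (1 - E) * (1 + E) = 1 - E * E := by noncomm_ring
  have h2 : (1 + E) * (1 - E) = 1 - E * E := by noncomm_ring
  rw [hE, sub_zero] at h1 h2
  exact isUnit_iff_exists.2 ⟨1 + E, h1, h2⟩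

lemma rel_clear {m : ℕ} (f : Matrix (Fin (m + 1)) (Fin (m + 1)) R4)
    (hpiv : ∀ i j, f 0 0 ∣ f i j) :
    ∃ B, Rel f (blk (f 0 0) B) := by
  choose c hc using fun i => hpiv i 0
  choose d hd using fun j => hpiv 0 j
  set E : Matrix (Fin (m + 1)) (Fin (m + 1)) R4 :=
    Matrix.of fun i j => if j = 0 ∧ i ≠ 0 then c i else 0 with hEdef
  set E' : Matrix (Fin (m + 1)) (Fin (m + 1)) R4 :=
    Matrix.of fun i j => if i = 0 ∧ j ≠ 0 then d j else 0 with hE'def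
  have hEsq : E * E = 0 := by
    ext i j
    rw [Matrix.mul_apply]
    refine Finset.sum_eq_zero fun k _ => ?_
    by_cases hk : k = 0
    · subst hk; simp [hEdef]
    · simp [hEdef, hk]
  have hE'sq : E' * E' = 0 := by
    ext i j
    rw [Matrix.mul_apply]
    refine Finset.sum_eq_zero fun k _ => ?_
    by_cases hk : k = 0
    · subst hk; simp [hE'def]
    · simp [hE'def, hk]
  have hEf : ∀ (M : Matrix (Fin (m + 1)) (Fin (m + 1)) R4) (i j),
      (E * M) i j = if i = 0 then 0 else c i * M 0 j := by
    intro M i j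
    rw [Matrix.mul_apply, Finset.sum_eq_single 0]
    · by_cases hi : i = 0 <;> simp [hEdef, hi]
    · intro k _ hk; simp [hEdef, hk]
    · simp
  have hME' : ∀ (M : Matrix (Fin (m + 1)) (Fin (m + 1)) R4) (i j),
      (M * E') i j = if j = 0 then 0 else M i 0 * d j := by
    intro M i j
    rw [Matrix.mul_apply, Finset.sum_eq_single 0]
    · by_cases hj : j = 0 <;> simp [hE'def, hj]
    · intro k _ hk; simp [hE'def, hk]
    · simp
  set N : Matrix (Fin (m + 1)) (Fin (m + 1)) R4 := (1 - E) * f with hNdef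
  have hN : ∀ i j, N i j = f i j - (if i = 0 then 0 else c i * f 0 j) := by
    intro i j
    rw [hNdef, sub_mul, one_mul, Matrix.sub_apply, hEf]
  set g : Matrix (Fin (m + 1)) (Fin (m + 1)) R4 := N * (1 - E') with hgdef
  have hg : ∀ i j, g i j = N i j - (if j = 0 then 0 else N i 0 * d j) := by
    intro i j
    rw [hgdef, mul_sub, mul_one, Matrix.sub_apply, hME']
  have hN0 : ∀ i, i ≠ 0 → N i 0 = 0 := by
    intro i hi
    rw [hN, if_neg hi, hc, mul_comm, sub_self]
  refine ⟨Matrix.of fun i j => g i.succ j.succ, (1 - E), (1 - E'), isUnit_one_sub hEsq,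
    isUnit_one_sub hE'sq, ?_⟩
  have : (1 - E) * f * (1 - E') = g := by rw [hgdef, hNdef]
  rw [this]
  ext i j
  rcases Fin.eq_zero_or_eq_succ i with rfl | ⟨i', rfl⟩ <;>
    rcases Fin.eq_zero_or_eq_succ j with rfl | ⟨j', rfl⟩
  · rw [hg, if_pos rfl, sub_zero, hN, if_pos rfl, sub_zero]; rfl
  · rw [hg, if_neg (Fin.succ_ne_zero j'), hN, if_pos rfl, sub_zero, hN, if_pos rfl, sub_zero,
      hd, sub_self]
    simp [blk, Fin.succ_ne_zero]
  · rw [hg, if_pos rfl, sub_zero, hN0 _ (Fin.succ_ne_zero i')]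
    simp [blk, Fin.succ_ne_zero]
  · simp [blk, Fin.succ_ne_zero]

lemma D_zero (n : ℕ) : D n 0 0 = 0 := by
  ext i j
  simp [D]

lemma blk_D_one {m p q : ℕ} : blk 1 (D m p q) = D (m + 1) (p + 1) q := by
  ext i j
  rcases Fin.eq_zero_or_eq_succ i with rfl | ⟨i', rfl⟩ <;>
    rcases Fin.eq_zero_or_eq_succ j with rfl | ⟨j', rfl⟩
  · simp [blk, D]
  · simp [blk, D, Fin.succ_ne_zero, (Fin.succ_ne_zero j').symm]
  · simp [blk, D, Fin.succ_ne_zero]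
  · have h1 : ((i' : ℕ) + 1 < p + 1) ↔ (i' : ℕ) < p := by omega
    have h2 : ((i' : ℕ) + 1 < p + 1 + q) ↔ (i' : ℕ) < p + q := by omega
    simp [blk, D, Fin.succ_ne_zero, Fin.succ_inj, h1, h2]

lemma blk_D_two {m q : ℕ} : blk 2 (D m 0 q) = D (m + 1) 0 (q + 1) := by
  ext i j
  rcases Fin.eq_zero_or_eq_succ i with rfl | ⟨i', rfl⟩ <;>
    rcases Fin.eq_zero_or_eq_succ j with rfl | ⟨j', rfl⟩
  · simp [blk, D]
  · simp [blk, D, Fin.succ_ne_zero, (Fin.succ_ne_zero j').symm]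
  · simp [blk, D, Fin.succ_ne_zero]
  · have h2 : ((i' : ℕ) + 1 < 0 + (q + 1)) ↔ (i' : ℕ) < 0 + q := by omega
    simp [blk, D, Fin.succ_ne_zero, Fin.succ_inj, h2]

lemma nonunit_dvd {x : R4} (h : ¬IsUnit x) : (2 : R4) ∣ x := by
  have hx : x = 0 ∨ x = 1 ∨ x = 2 ∨ x = 3 :=
    (by decide : ∀ y : R4, y = 0 ∨ y = 1 ∨ y = 2 ∨ y = 3) x
  rcases hx with rfl | rfl | rfl | rfl
  · exact ⟨0, by decide⟩
  · exact absurd isUnit_one h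
  · exact ⟨1, by decide⟩
  · exact absurd ⟨⟨3, 3, by decide, by decide⟩, rfl⟩ h

lemma nonunit_ne_zero {x : R4} (h : ¬IsUnit x) (h0 : x ≠ 0) : x = 2 := by
  have hx : x = 0 ∨ x = 1 ∨ x = 2 ∨ x = 3 :=
    (by decide : ∀ y : R4, y = 0 ∨ y = 1 ∨ y = 2 ∨ y = 3) x
  rcases hx with rfl | rfl | rfl | rfl
  · exact absurd rfl h0
  · exact absurd isUnit_one h
  · rfl
  · exact absurd ⟨⟨3, 3, by decide, by decide⟩, rfl⟩ h

lemma two_not_dvd_one : ¬ (2 : R4) ∣ 1 := by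
  rintro ⟨c, hc⟩
  have hx : c = 0 ∨ c = 1 ∨ c = 2 ∨ c = 3 :=
    (by decide : ∀ y : R4, y = 0 ∨ y = 1 ∨ y = 2 ∨ y = 3) c
  rcases hx with rfl | rfl | rfl | rfl <;> revert hc <;> decide

lemma main : ∀ (n : ℕ) (f : Matrix (Fin n) (Fin n) R4),
    ∃ p q, p + q ≤ n ∧ Rel f (D n p q) := by
  intro n
  induction n with
  | zero =>
    intro f
    exact ⟨0, 0, le_rfl, 1, 1, isUnit_one, isUnit_one, by ext i j; exact i.elim0⟩
  | succ m IH =>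
    intro f
    by_cases hf0 : f = 0
    · refine ⟨0, 0, by omega, 1, 1, isUnit_one, isUnit_one, ?_⟩
      rw [hf0, D_zero]
      simp
    by_cases hu : ∃ i j, IsUnit (f i j)
    · -- unit pivot case
      obtain ⟨i₀, j₀, hu⟩ := hu
      set σ := Equiv.swap (0 : Fin (m + 1)) i₀ with hσ
      set τ := Equiv.swap (0 : Fin (m + 1)) j₀ with hτ
      set w : Matrix (Fin (m + 1)) (Fin (m + 1)) R4 :=
        diagonal (fun i => if i = 0 then (↑hu.unit⁻¹ : R4) else 1) with hw
      have hwu : IsUnit w := by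
        rw [hw, Matrix.isUnit_diagonal]
        refine isUnit_iff_exists.2 ⟨fun i => if i = 0 then (hu.unit : R4) else 1, ?_, ?_⟩ <;>
          funext i <;> by_cases hi : i = 0 <;> simp [hi]
      set f₂ := w * (f.submatrix σ τ) with hf₂
      have hrel1 : Rel f f₂ :=
        (rel_submatrix f σ τ).trans ⟨w, 1, hwu, isUnit_one, by rw [mul_one]⟩
      have h00 : f₂ 0 0 = 1 := by
        rw [hf₂, Matrix.diagonal_mul, Matrix.submatrix_apply, hσ, hτ, if_pos rfl,
          Equiv.swap_apply_left, Equiv.swap_apply_left]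
        exact IsUnit.val_inv_mul hu
      obtain ⟨B, hrelB⟩ := rel_clear f₂ (by rw [h00]; exact fun i j => one_dvd _)
      rw [h00] at hrelB
      obtain ⟨p, q, hpq, hrelD⟩ := IH B
      refine ⟨p + 1, q, by omega, ?_⟩
      have : Rel f (blk 1 (D m p q)) :=
        (hrel1.trans hrelB).trans (hrelD.blk_congr 1)
      rw [blk_D_one] at this
      exact this
    · -- all entries non-units
      push_neg at hu
      have hev : ∀ i j, (2 : R4) ∣ f i j := fun i j => nonunit_dvd (hu i j)
      have hex : ∃ i j, f i j ≠ 0 := by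
        by_contra h
        push_neg at h
        exact hf0 (by ext i j; exact h i j)
      obtain ⟨i₀, j₀, hne⟩ := hex
      have hpv : f i₀ j₀ = 2 := nonunit_ne_zero (hu i₀ j₀) hne
      set σ := Equiv.swap (0 : Fin (m + 1)) i₀ with hσ
      set τ := Equiv.swap (0 : Fin (m + 1)) j₀ with hτ
      set f₁ := f.submatrix σ τ with hf₁
      have hrel1 : Rel f f₁ := rel_submatrix f σ τ
      have h00 : f₁ 0 0 = 2 := by
        rw [hf₁, Matrix.submatrix_apply, hσ, hτ, Equiv.swap_apply_left, Equiv.swap_apply_left]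
        exact hpv
      obtain ⟨B, hrelB⟩ := rel_clear f₁ (by
        rw [h00]; exact fun i j => nonunit_dvd (hu _ _))
      rw [h00] at hrelB
      have hrelf : Rel f (blk 2 B) := hrel1.trans hrelB
      have hBev : ∀ i j, (2 : R4) ∣ B i j := by
        intro i j
        have := hrelf.dvd hev i.succ j.succ
        rwa [blk_succ_succ] at this
      obtain ⟨p, q, hpq, hrelD⟩ := IH B
      have hp0 : p = 0 := by
        by_contra hp
        have hm : 0 < m := by omega
        set i : Fin m := ⟨0, hm⟩ with hi
        have hD := hrelD.dvd hBev i i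
        have : D m p q i i = 1 := by
          simp [D, hi]
          omega
        rw [this] at hD
        exact two_not_dvd_one hD
      subst hp0
      refine ⟨0, q + 1, by omega, ?_⟩
      have : Rel f (blk 2 (D m 0 q)) := hrelf.trans (hrelD.blk_congr 2)
      rwa [blk_D_two] at this

end Stmt3

/-- Over `R = ℤ/4`, any square matrix can be written, up to pre- and post-composition with
invertible matrices, as a block diagonal matrix `diag(I, 2·I', 0)`. -/
theorem stmt_3 (n : ℕ) (f : Matrix (Fin n) (Fin n) (ZMod 4)) :
    ∃ (p q : ℕ), p + q ≤ n ∧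
      ∃ u v : GL (Fin n) (ZMod 4),
        (u : Matrix (Fin n) (Fin n) (ZMod 4)) * f * (v : Matrix (Fin n) (Fin n) (ZMod 4)) =
          Matrix.of (fun i j : Fin n =>
            if i = j then
              (if (i : ℕ) < p then 1 else if (i : ℕ) < p + q then 2 else 0)
            else 0) := by
  obtain ⟨p, q, hpq, u, v, hu, hv, h⟩ := Stmt3.main n f
  refine ⟨p, q, hpq, hu.unit, hv.unit, ?_⟩
  show (↑hu.unit : Matrix (Fin n) (Fin n) (ZMod 4)) * f * (↑hv.unit : Matrix (Fin n) (Fin n) (ZMod 4)) = _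
  rw [IsUnit.unit_spec, IsUnit.unit_spec]
  exact h
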